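/- For the reflected random walk started at 0, the sequence E_0[X_n] is nondecreasing along even n, and nondecreasing along odd n; moreover E_0[X_{2n}] < E_0[X_{2n-1}] and E_0[X_{2n+1}] > E_0[X_{2n}] for n ≥ 1. -/

import Mathlib

open Finset

private noncomputable def gfun (δ : ℝ) (k x : ℕ) : ℝ :=
  if x = 0 then (if k ≤ 1 then 1 else 0)
  else if k + 1 ≤ x then 1
  else if k ≤ x + 1 then (x : ℝ) / (2 * x + δ)
  else 0

private lemma abel_sum (f g : ℕ → ℝ) (N : ℕ) :
    ∑ x ∈ Finset.range N, f x * g x =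
      g 0 * ∑ y ∈ Finset.range N, f y +
        ∑ k ∈ Finset.Ico 1 N, (g k - g (k - 1)) * ∑ y ∈ Finset.Ico k N, f y := by
  induction N with
  | zero => simp
  | succ N ih =>
    rcases Nat.eq_zero_or_pos N with rfl | hN
    · simp [mul_comm]
    · have hsplit : ∀ k ∈ Finset.Ico 1 (N+1),
          (g k - g (k-1)) * ∑ y ∈ Finset.Ico k (N+1), f y
            = (g k - g (k-1)) * ∑ y ∈ Finset.Ico k N, f y + (g k - g (k-1)) * f N := by
        intro k hk
        rw [Finset.sum_Ico_succ_top (by simp at hk; omega), mul_add]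
      rw [Finset.sum_range_succ, ih, Finset.sum_range_succ,
        Finset.sum_congr rfl hsplit, Finset.sum_add_distrib, ← Finset.sum_mul]
      have htel : ∑ k ∈ Finset.Ico 1 (N+1), (g k - g (k-1)) = g N - g 0 := by
        rw [Finset.sum_Ico_eq_sum_range]
        have h1 : ∀ i, g (1+i) - g (1+i-1) = g (i+1) - g i := by
          intro i
          have : 1 + i = i + 1 := by omega
          rw [this, Nat.add_sub_cancel]
        rw [Finset.sum_congr rfl (fun i _ => h1 i)]
        have : N + 1 - 1 = N := by omega
        rw [this, Finset.sum_range_sub g N]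
      have htop : ∑ k ∈ Finset.Ico 1 (N+1), (g k - g (k-1)) * ∑ y ∈ Finset.Ico k N, f y
          = ∑ k ∈ Finset.Ico 1 N, (g k - g (k-1)) * ∑ y ∈ Finset.Ico k N, f y := by
        rw [Finset.sum_Ico_succ_top (by omega)]
        simp [Finset.Ico_self]
      rw [htop, htel]
      ring

private lemma gfun_mono (δ : ℝ) (hδ : 0 < δ) (k i : ℕ) (hk : 2 ≤ k) :
    gfun δ k i ≤ gfun δ k (i + 1) := by
  have hden : ∀ x : ℕ, (0:ℝ) < 2 * x + δ := by
    intro x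
    have : (0:ℝ) ≤ (x:ℝ) := Nat.cast_nonneg x
    linarith
  have hnn : ∀ x : ℕ, (0:ℝ) ≤ (x:ℝ) / (2 * x + δ) :=
    fun x => div_nonneg (Nat.cast_nonneg x) (hden x).le
  have hle1 : ∀ x : ℕ, (x:ℝ) / (2 * x + δ) ≤ 1 := by
    intro x
    rw [div_le_one (hden x)]
    have : (0:ℝ) ≤ (x:ℝ) := Nat.cast_nonneg x
    linarith
  have hmono : ∀ x : ℕ, (x:ℝ) / (2 * x + δ) ≤ ((x:ℝ)+1) / (2 * ((x:ℝ)+1) + δ) := by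
    intro x
    rw [div_le_div_iff₀ (hden x) (by have := hden (x+1); push_cast at this ⊢; linarith)]
    have : (0:ℝ) ≤ (x:ℝ) := Nat.cast_nonneg x
    nlinarith
  simp only [gfun]
  split_ifs <;> push_cast
  all_goals try rfl
  all_goals try (exfalso; omega)
  all_goals try contradiction
  all_goals
    (have h1 := hnn (i+1); have h2 := hle1 i; have h3 := hnn i; have h4 := hmono i;
     push_cast at h1 h2 h3 h4; try linarith)
  all_goals norm_num

theorem stmt_14 (δ : ℝ) (hδ : 0 < δ)
    (P : ℕ → ℕ → ℝ)  -- transition matrix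
    (hP : ∀ y z : ℕ, P y z =
      if y = 0 then (if z = 1 then 1 else 0)
      else if z = y + 1 then (y : ℝ) / (2 * y + δ)
      else if z = y - 1 then ((y : ℝ) + δ) / (2 * y + δ)
      else 0)
    (μ : ℕ → ℕ → ℝ)  -- distribution of X_n started at 0
    (hμ0 : ∀ y : ℕ, μ 0 y = if y = 0 then 1 else 0)
    (hμ : ∀ n z : ℕ, μ (n + 1) z = ∑' x : ℕ, μ n x * P x z)
    (E : ℕ → ℝ)  -- E n = E_0[X_n]
    (hE : ∀ n : ℕ, E n = ∑' y : ℕ, (y : ℝ) * μ n y) :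
    (∀ n : ℕ, E n ≤ E (n + 2)) ∧
    (∀ n : ℕ, 1 ≤ n → E (2 * n) < E (2 * n - 1)) ∧
    (∀ n : ℕ, 1 ≤ n → E (2 * n) < E (2 * n + 1)) := by
  have hden : ∀ x : ℕ, (0:ℝ) < 2 * x + δ := by
    intro x
    have : (0:ℝ) ≤ (x:ℝ) := Nat.cast_nonneg x
    linarith
  have hPnn : ∀ x z, 0 ≤ P x z := by
    intro x z
    rw [hP]
    split_ifs
    · norm_num
    · norm_num
    · exact div_nonneg (Nat.cast_nonneg x) (hden x).le
    · exact div_nonneg (by have : (0:ℝ) ≤ (x:ℝ) := Nat.cast_nonneg x; linarith) (hden x).le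
    · norm_num
  have hPsplit : ∀ x z : ℕ, x ≠ 0 → P x z =
      (if z = x + 1 then (x:ℝ) / (2 * x + δ) else 0) +
      (if z = x - 1 then ((x:ℝ) + δ) / (2 * x + δ) else 0) := by
    intro x z hx
    rw [hP, if_neg hx]
    by_cases h1 : z = x + 1
    · have h3 : x + 1 ≠ x - 1 := by omega
      simp [h1, h3]
    · by_cases h2 : z = x - 1
      · have h3 : ¬ (x - 1 = x + 1) := by omega
        simp [h1, h2, h3]
      · simp [h1, h2]
  have mu_supp : ∀ n y, n < y → μ n y = 0 := by
    intro n
    induction n with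
    | zero =>
      intro y hy
      rw [hμ0, if_neg (by omega)]
    | succ n ih =>
      intro y hy
      rw [hμ]
      have hz : ∀ x : ℕ, μ n x * P x y = 0 := by
        intro x
        rcases le_or_gt x n with h | h
        · have : P x y = 0 := by
            rw [hP]
            split_ifs <;> first | rfl | (exfalso; omega)
          rw [this, mul_zero]
        · rw [ih x h, zero_mul]
      exact (tsum_congr hz).trans tsum_zero
  have mu_nonneg : ∀ n y, 0 ≤ μ n y := by
    intro n
    induction n with
    | zero =>
      intro y
      rw [hμ0]
      split_ifs <;> norm_num
    | succ n ih =>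
      intro y
      rw [hμ]
      exact tsum_nonneg fun x => mul_nonneg (ih x) (hPnn x y)
  have mu_rec_fin : ∀ n z, μ (n+1) z = ∑ x ∈ Finset.range (n+1), μ n x * P x z := by
    intro n z
    rw [hμ]
    exact tsum_eq_sum fun x hx => by
      rw [mu_supp n x (by simp at hx; omega), zero_mul]
  have mu_parity : ∀ n y, y % 2 ≠ n % 2 → μ n y = 0 := by
    intro n
    induction n with
    | zero =>
      intro y hy
      rw [hμ0, if_neg (by omega)]
    | succ n ih =>
      intro y hy
      rw [mu_rec_fin]
      apply Finset.sum_eq_zero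
      intro x _
      rcases Nat.decEq (x % 2) (n % 2) with h | h
      · rw [ih x h, zero_mul]
      · have : P x y = 0 := by
          rw [hP]
          split_ifs <;> first | rfl | (exfalso; omega)
        rw [this, mul_zero]
  have row_sum : ∀ x N : ℕ, x + 1 < N → ∑ z ∈ Finset.range N, P x z = 1 := by
    intro x N hN
    rcases Nat.eq_zero_or_pos x with rfl | hx
    · have hcongr : ∀ z ∈ Finset.range N, P 0 z = if z = 1 then (1:ℝ) else 0 := by
        intro z _
        rw [hP]
        simp
      rw [Finset.sum_congr rfl hcongr,
        Finset.sum_ite_eq' (Finset.range N) 1 (fun _ => (1:ℝ)),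
        if_pos (Finset.mem_range.mpr (by omega))]
    · have hx0 : x ≠ 0 := by omega
      rw [Finset.sum_congr rfl (fun z (_ : z ∈ Finset.range N) => hPsplit x z hx0),
        Finset.sum_add_distrib,
        Finset.sum_ite_eq' (Finset.range N) (x+1) (fun _ => (x:ℝ)/(2*x+δ)),
        Finset.sum_ite_eq' (Finset.range N) (x-1) (fun _ => ((x:ℝ)+δ)/(2*x+δ)),
        if_pos (Finset.mem_range.mpr (by omega)),
        if_pos (Finset.mem_range.mpr (by omega))]
      have h2 := (hden x).ne'
      field_simp
      ring
  have mass1 : ∀ n, ∑ y ∈ Finset.range (n+1), μ n y = 1 := by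
    intro n
    induction n with
    | zero => simp [hμ0]
    | succ n ih =>
      rw [Finset.sum_congr rfl (fun z (_ : z ∈ Finset.range (n+2)) => mu_rec_fin n z),
        Finset.sum_comm]
      have h1 : ∀ x ∈ Finset.range (n+1), ∑ z ∈ Finset.range (n+2), μ n x * P x z = μ n x := by
        intro x hx
        rw [← Finset.mul_sum, row_sum x (n+2) (by simp at hx; omega), mul_one]
      rw [Finset.sum_congr rfl h1, ih]
  have mass : ∀ n N : ℕ, n < N → ∑ y ∈ Finset.range N, μ n y = 1 := by
    intro n N hN
    rw [← Finset.sum_subset (Finset.range_subset_range.mpr hN)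
      (fun y _ hy => mu_supp n y (by simp at hy; omega))]
    exact mass1 n
  have tail_ext : ∀ n k N : ℕ, n < N →
      ∑ y ∈ Finset.Ico k N, μ n y = ∑ y ∈ Finset.Ico k (n+1), μ n y := by
    intro n k N hN
    exact (Finset.sum_subset (Finset.Ico_subset_Ico_right (by omega))
      (fun y hy hy2 => mu_supp n y (by simp [Finset.mem_Ico] at hy hy2; omega))).symm
  have tailP : ∀ x k N : ℕ, x + 1 < N → ∑ z ∈ Finset.Ico k N, P x z = gfun δ k x := by
    intro x k N hN
    rcases Nat.eq_zero_or_pos x with rfl | hx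
    · have hcongr : ∀ z ∈ Finset.Ico k N, P 0 z = if z = 1 then (1:ℝ) else 0 := by
        intro z _
        rw [hP]
        simp
      rw [Finset.sum_congr rfl hcongr,
        Finset.sum_ite_eq' (Finset.Ico k N) 1 (fun _ => (1:ℝ))]
      by_cases hk : k ≤ 1
      · rw [if_pos (Finset.mem_Ico.mpr ⟨hk, by omega⟩)]
        simp [gfun, hk]
      · rw [if_neg (by simp [Finset.mem_Ico]; omega)]
        simp [gfun, hk]
    · have hx0 : x ≠ 0 := by omega
      rw [Finset.sum_congr rfl (fun z (_ : z ∈ Finset.Ico k N) => hPsplit x z hx0),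
        Finset.sum_add_distrib,
        Finset.sum_ite_eq' (Finset.Ico k N) (x+1) (fun _ => (x:ℝ)/(2*x+δ)),
        Finset.sum_ite_eq' (Finset.Ico k N) (x-1) (fun _ => ((x:ℝ)+δ)/(2*x+δ))]
      simp only [gfun, if_neg hx0, Finset.mem_Ico]
      by_cases h1 : k + 1 ≤ x
      · rw [if_pos ⟨by omega, by omega⟩, if_pos ⟨by omega, by omega⟩, if_pos h1]
        have h2 := (hden x).ne'
        field_simp
        ring
      · by_cases h2 : k ≤ x + 1
        · rw [if_pos ⟨by omega, by omega⟩, if_neg (by omega), if_neg h1, if_pos h2, add_zero]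
        · rw [if_neg (by omega), if_neg (by omega), if_neg h1, if_neg h2, add_zero]
  have tail_rec : ∀ n k N : ℕ, n + 1 < N →
      ∑ z ∈ Finset.Ico k N, μ (n+1) z = ∑ x ∈ Finset.range N, μ n x * gfun δ k x := by
    intro n k N hN
    rw [Finset.sum_congr rfl (fun z (_ : z ∈ Finset.Ico k N) => mu_rec_fin n z),
      Finset.sum_comm]
    have h2 : ∀ x ∈ Finset.range (n+1),
        ∑ z ∈ Finset.Ico k N, μ n x * P x z = μ n x * gfun δ k x := by
      intro x hx
      rw [← Finset.mul_sum, tailP x k N (by simp at hx; omega)]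
    rw [Finset.sum_congr rfl h2]
    exact Finset.sum_subset (Finset.range_subset_range.mpr (by omega))
      (fun x _ hx => by rw [mu_supp n x (by simp at hx; omega), zero_mul])
  have tail1 : ∀ m, ∑ y ∈ Finset.Ico 1 (m+1), μ m y = 1 - μ m 0 := by
    intro m
    have h1 : ∑ y ∈ Finset.range (m+1), μ m y = 1 := mass1 m
    rw [Finset.range_eq_Ico, Finset.sum_eq_sum_Ico_succ_bot (by omega) (μ m)] at h1
    linarith
  have mu_zero_rec : ∀ m, μ (m+1) 0 = μ m 1 * ((1+δ)/(2+δ)) := by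
    intro m
    rw [mu_rec_fin]
    have hmain : P 1 0 = (1+δ)/(2+δ) := by
      rw [hP]
      norm_num
    rw [Finset.sum_eq_single 1 ?_ ?_, hmain]
    · intro x _ hx1
      have hPx : P x 0 = 0 := by
        rcases Nat.eq_zero_or_pos x with rfl | hxpos
        · rw [hP]
          norm_num
        · rw [hP, if_neg (by omega), if_neg (by omega), if_neg (by omega)]
      rw [hPx, mul_zero]
    · intro h1
      rw [mu_supp m 1 (by simp at h1; omega), zero_mul]
  have H : ∀ n k : ℕ, ∑ y ∈ Finset.Ico k (n+1), μ n y ≤ ∑ y ∈ Finset.Ico k (n+3), μ (n+2) y := by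
    intro n
    induction n with
    | zero =>
      intro k
      rcases Nat.eq_zero_or_pos k with rfl | hk
      · rw [← Finset.range_eq_Ico, mass 0 1 (by omega), ← Finset.range_eq_Ico, mass 2 3 (by omega)]
      · rw [Finset.Ico_eq_empty (by omega), Finset.sum_empty]
        exact Finset.sum_nonneg fun y _ => mu_nonneg _ _
    | succ n ih =>
      intro k
      match k with
      | 0 =>
        rw [← Finset.range_eq_Ico, mass (n+1) (n+2) (by omega), ← Finset.range_eq_Ico, mass (n+3) (n+4) (by omega)]
      | 1 =>
        have hL : ∑ y ∈ Finset.Ico 1 (n+2), μ (n+1) y = 1 - μ (n+1) 0 := tail1 (n+1)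
        have hR : ∑ y ∈ Finset.Ico 1 (n+4), μ (n+3) y = 1 - μ (n+3) 0 := tail1 (n+3)
        rw [hL, hR]
        rcases Nat.mod_two_eq_zero_or_one n with hpar | hpar
        · rw [mu_parity (n+1) 0 (by omega), mu_parity (n+3) 0 (by omega)]
        · have h1 := mu_zero_rec n
          have h2 := mu_zero_rec (n+2)
          have hn0 : μ n 0 = 0 := mu_parity n 0 (by omega)
          have hn20 : μ (n+2) 0 = 0 := mu_parity (n+2) 0 (by omega)
          have e1 : ∑ y ∈ Finset.Ico 1 (n+1), μ n y
              = μ n 1 + ∑ y ∈ Finset.Ico 2 (n+1), μ n y :=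
            Finset.sum_eq_sum_Ico_succ_bot (by omega) (μ n)
          have e2 : ∑ y ∈ Finset.Ico 1 (n+3), μ (n+2) y
              = μ (n+2) 1 + ∑ y ∈ Finset.Ico 2 (n+3), μ (n+2) y :=
            Finset.sum_eq_sum_Ico_succ_bot (by omega) (μ (n+2))
          have t1 := tail1 n
          have t2 := tail1 (n+2)
          have hk2 := ih 2
          have hmu1 : μ (n+2) 1 ≤ μ n 1 := by
            rw [hn0] at t1
            rw [hn20] at t2
            linarith
          have hc : (0:ℝ) ≤ (1+δ)/(2+δ) := div_nonneg (by linarith) (by linarith)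
          have := mul_le_mul_of_nonneg_right hmu1 hc
          rw [h1, h2]
          linarith
      | (j+2) =>
        have hL : ∑ y ∈ Finset.Ico (j+2) (n+2), μ (n+1) y
            = ∑ y ∈ Finset.Ico (j+2) (n+4), μ (n+1) y :=
          (tail_ext (n+1) (j+2) (n+4) (by omega)).symm
        rw [hL, tail_rec n (j+2) (n+4) (by omega), tail_rec (n+2) (j+2) (n+4) (by omega),
          abel_sum (fun x => μ n x) (gfun δ (j+2)) (n+4),
          abel_sum (fun x => μ (n+2) x) (gfun δ (j+2)) (n+4)]
        rw [mass n (n+4) (by omega), mass (n+2) (n+4) (by omega)]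
        apply add_le_add le_rfl
        apply Finset.sum_le_sum
        intro m hm
        have hm1 : 1 ≤ m := (Finset.mem_Ico.mp hm).1
        have hg : 0 ≤ gfun δ (j+2) m - gfun δ (j+2) (m-1) := by
          obtain ⟨i, rfl⟩ : ∃ i, m = i + 1 := ⟨m-1, by omega⟩
          have := gfun_mono δ hδ (j+2) i (by omega)
          simp only [Nat.add_sub_cancel]
          linarith
        have hT : ∑ y ∈ Finset.Ico m (n+4), μ n y ≤ ∑ y ∈ Finset.Ico m (n+4), μ (n+2) y := by
          rw [tail_ext n m (n+4) (by omega), tail_ext (n+2) m (n+4) (by omega)]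
          exact ih m
        exact mul_le_mul_of_nonneg_left hT hg
  have Efin : ∀ n, E n = ∑ y ∈ Finset.range (n+1), (y:ℝ) * μ n y := by
    intro n
    rw [hE]
    exact tsum_eq_sum fun y hy => by
      rw [mu_supp n y (by simp at hy; omega), mul_zero]
  have layer : ∀ n N : ℕ, n < N →
      E n = ∑ k ∈ Finset.Ico 1 N, ∑ y ∈ Finset.Ico k N, μ n y := by
    intro n N hN
    rw [Efin n,
      Finset.sum_subset (Finset.range_subset_range.mpr hN)
        (fun y _ hy => by rw [mu_supp n y (by simp at hy; omega), mul_zero]),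
      Finset.sum_Ico_Ico_comm 1 N (fun _ y => μ n y)]
    have hinner : ∀ y ∈ Finset.Ico 1 N, ∑ _k ∈ Finset.Ico 1 (y+1), μ n y = (y:ℝ) * μ n y := by
      intro y _
      rw [Finset.sum_const, Nat.card_Ico, nsmul_eq_mul]
      norm_num
    rw [Finset.sum_congr rfl hinner, Finset.range_eq_Ico,
      Finset.sum_eq_sum_Ico_succ_bot (by omega : 0 < N) (fun y => (y:ℝ) * μ n y)]
    simp
  have claim1 : ∀ n, E n ≤ E (n + 2) := by
    intro n
    rw [layer n (n+3) (by omega), layer (n+2) (n+3) (by omega)]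
    apply Finset.sum_le_sum
    intro k _
    calc ∑ y ∈ Finset.Ico k (n+3), μ n y
        = ∑ y ∈ Finset.Ico k (n+1), μ n y := tail_ext n k (n+3) (by omega)
      _ ≤ ∑ y ∈ Finset.Ico k (n+3), μ (n+2) y := H n k
  have moment1 : ∀ x N : ℕ, x + 1 < N →
      ∑ z ∈ Finset.range N, (z:ℝ) * P x z
        = if x = 0 then 1 else (x:ℝ) - δ/(2*x+δ) := by
    intro x N hN
    rcases Nat.eq_zero_or_pos x with rfl | hx
    · have hcongr : ∀ z ∈ Finset.range N, (z:ℝ) * P 0 z = if z = 1 then (1:ℝ) else 0 := by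
        intro z _
        rw [hP]
        by_cases h : z = 1 <;> simp [h]
      rw [Finset.sum_congr rfl hcongr,
        Finset.sum_ite_eq' (Finset.range N) 1 (fun _ => (1:ℝ)),
        if_pos (Finset.mem_range.mpr (by omega)), if_pos rfl]
    · have hx0 : x ≠ 0 := by omega
      have hcongr : ∀ z ∈ Finset.range N, (z:ℝ) * P x z
          = (if z = x+1 then ((x:ℝ)+1) * ((x:ℝ)/(2*x+δ)) else 0) +
            (if z = x-1 then ((x:ℝ)-1) * (((x:ℝ)+δ)/(2*x+δ)) else 0) := by
        intro z _
        rw [hPsplit x z hx0]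
        by_cases h1 : z = x + 1
        · have h2 : z ≠ x - 1 := by omega
          rw [if_pos h1, if_pos h1, if_neg h2, if_neg h2, h1]
          push_cast
          ring
        · by_cases h2 : z = x - 1
          · rw [if_neg h1, if_neg h1, if_pos h2, if_pos h2, h2, Nat.cast_sub (by omega)]
            push_cast
            ring
          · rw [if_neg h1, if_neg h1, if_neg h2, if_neg h2]
            simp
      rw [Finset.sum_congr rfl hcongr, Finset.sum_add_distrib,
        Finset.sum_ite_eq' (Finset.range N) (x+1) (fun _ => ((x:ℝ)+1) * ((x:ℝ)/(2*x+δ))),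
        Finset.sum_ite_eq' (Finset.range N) (x-1) (fun _ => ((x:ℝ)-1) * (((x:ℝ)+δ)/(2*x+δ))),
        if_pos (Finset.mem_range.mpr (by omega)),
        if_pos (Finset.mem_range.mpr (by omega)), if_neg hx0]
      have h2 := (hden x).ne'
      field_simp
      ring
  have E_rec : ∀ m, E (m+1)
      = ∑ x ∈ Finset.range (m+1), μ m x * (if x = 0 then 1 else (x:ℝ) - δ/(2*x+δ)) := by
    intro m
    rw [Efin (m+1)]
    have h1 : ∀ z ∈ Finset.range (m+2),
        (z:ℝ) * μ (m+1) z = ∑ x ∈ Finset.range (m+1), μ m x * ((z:ℝ) * P x z) := by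
      intro z _
      rw [mu_rec_fin, Finset.mul_sum]
      exact Finset.sum_congr rfl fun x _ => by ring
    rw [Finset.sum_congr rfl h1, Finset.sum_comm]
    exact Finset.sum_congr rfl fun x hx => by
      rw [← Finset.mul_sum, moment1 x (m+2) (by simp at hx; omega)]
  have odd_dec : ∀ m, m % 2 = 1 → E (m+1) < E m := by
    intro m hm
    have hm0 : μ m 0 = 0 := mu_parity m 0 (by omega)
    have key : E (m+1) - E m
        = ∑ x ∈ Finset.range (m+1), μ m x * (if x = 0 then (1:ℝ) else -(δ/(2*x+δ))) := by
      rw [E_rec m, Efin m, ← Finset.sum_sub_distrib]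
      refine Finset.sum_congr rfl fun x _ => ?_
      split_ifs with h
      · subst h; simp
      · ring
    have hsum : ∑ x ∈ Finset.range (m+1), μ m x * (-(δ/(2*(m:ℝ)+δ)))
        = -(δ/(2*(m:ℝ)+δ)) := by
      rw [← Finset.sum_mul, mass1 m, one_mul]
    have hle : E (m+1) - E m ≤ -(δ/(2*(m:ℝ)+δ)) := by
      rw [key, ← hsum]
      apply Finset.sum_le_sum
      intro x hx
      rcases Nat.eq_zero_or_pos x with rfl | hx1
      · rw [hm0]
        simp
      · rw [if_neg (by omega)]
        apply mul_le_mul_of_nonneg_left _ (mu_nonneg m x)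
        have hxm : (x:ℝ) ≤ (m:ℝ) := by
          have : x ≤ m := by simp at hx; omega
          exact_mod_cast this
        have hdd : δ/(2*(m:ℝ)+δ) ≤ δ/(2*(x:ℝ)+δ) := by
          apply div_le_div_of_nonneg_left hδ.le (hden x)
          linarith
        linarith
    have hpos : 0 < δ/(2*(m:ℝ)+δ) := div_pos hδ (hden m)
    linarith
  refine ⟨claim1, ?_, ?_⟩
  · intro n hn
    obtain ⟨j, rfl⟩ : ∃ j, n = j + 1 := ⟨n-1, by omega⟩
    have h2 : 2*(j+1) - 1 = 2*j+1 := by omega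
    have h3 : 2*(j+1) = (2*j+1)+1 := by ring
    rw [h2, h3]
    exact odd_dec (2*j+1) (by omega)
  · intro n _
    have h1 : E (2*n) ≤ E (2*n+2) := claim1 (2*n)
    have h2 : E ((2*n+1)+1) < E (2*n+1) := odd_dec (2*n+1) (by omega)
    have h3 : (2*n+1)+1 = 2*n+2 := by ring
    rw [h3] at h2
    linarith
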